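/- For every real number α with 0 < α < 1/2 there exists a constant C > 0 such that for all positive integers n, the number of compositions of n in which every part is at least 2 is at most C · 2^{n-1} · ( e^{-2α²n} + 2^{-(1/2-α)n} ). -/

import Mathlib

/-- A list of natural numbers is a composition of `n` if all its entries are
positive and they sum to `n`. -/
def IsComposition (n : ℕ) (L : List ℕ) : Prop :=
  (∀ x ∈ L, 0 < x) ∧ L.sum = n

abbrev CompGe2 (n : ℕ) := {L : List ℕ // IsComposition n L ∧ ∀ x ∈ L, 2 ≤ x}

instance CompGe2.finite (n : ℕ) : Finite (CompGe2 n) := by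
  have : Function.Injective (fun L : CompGe2 n =>
      (⟨L.val, @fun i hi => L.2.1.1 i hi, L.2.1.2⟩ : Composition n)) := by
    intro L M h
    exact Subtype.ext (congrArg Composition.blocks h)
  exact Finite.of_injective _ this

lemma CompGe2.ne_nil {n : ℕ} (hn : 0 < n) (L : CompGe2 n) : L.val ≠ [] := by
  intro h
  have := L.2.1.2
  rw [h] at this
  simp at this
  omega

noncomputable def CompGe2.step {n : ℕ} (hn : 2 ≤ n) (L : CompGe2 n) :
    CompGe2 (n - 1) ⊕ CompGe2 (n - 2) :=
  if h : L.val.head! = 2 then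
    Sum.inr ⟨L.val.tail, by
      have hne := CompGe2.ne_nil (by omega) L
      have hc := List.cons_head!_tail hne
      obtain ⟨⟨hpos, hsum⟩, h2⟩ := L.2
      refine ⟨⟨fun x hx => hpos x ?_, ?_⟩, fun x hx => h2 x ?_⟩
      · rw [← hc]; exact List.mem_cons_of_mem _ hx
      · rw [← hc] at hsum; simp at hsum; omega
      · rw [← hc]; exact List.mem_cons_of_mem _ hx⟩
  else
    Sum.inl ⟨(L.val.head! - 1) :: L.val.tail, by
      have hne := CompGe2.ne_nil (by omega) L
      have hc := List.cons_head!_tail hne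
      obtain ⟨⟨hpos, hsum⟩, h2⟩ := L.2
      have hh : 2 ≤ L.val.head! := h2 _ (by rw [← hc]; exact List.mem_cons_self)
      refine ⟨⟨fun x hx => ?_, ?_⟩, fun x hx => ?_⟩
      · rcases List.mem_cons.1 hx with rfl | hx
        · omega
        · exact hpos x (by rw [← hc]; exact List.mem_cons_of_mem _ hx)
      · rw [← hc] at hsum; simp only [List.sum_cons] at hsum ⊢; omega
      · rcases List.mem_cons.1 hx with rfl | hx
        · omega
        · exact h2 x (by rw [← hc]; exact List.mem_cons_of_mem _ hx)⟩

lemma CompGe2.step_injective {n : ℕ} (hn : 2 ≤ n) :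
    Function.Injective (CompGe2.step hn) := by
  intro L M h
  unfold CompGe2.step at h
  have hLne := CompGe2.ne_nil (show 0 < n by omega) L
  have hMne := CompGe2.ne_nil (show 0 < n by omega) M
  have hLc := List.cons_head!_tail hLne
  have hMc := List.cons_head!_tail hMne
  split_ifs at h with h1 h2 h2 <;> simp only [Sum.inr.injEq, Sum.inl.injEq, Subtype.mk.injEq] at h
  · apply Subtype.ext
    rw [← hLc, ← hMc, h1, h2, h]
  · have hL2 : 2 ≤ L.val.head! := L.2.2 _ (by rw [← hLc]; exact List.mem_cons_self)
    have hM2 : 2 ≤ M.val.head! := M.2.2 _ (by rw [← hMc]; exact List.mem_cons_self)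
    obtain ⟨hheads, htails⟩ := List.cons.injEq _ _ _ _ ▸ h
    apply Subtype.ext
    rw [← hLc, ← hMc, htails]
    congr 1
    omega

lemma CompGe2.card_eq_zero_one : Nat.card (CompGe2 1) = 0 := by
  have : IsEmpty (CompGe2 1) := by
    constructor
    rintro ⟨L, ⟨hpos, hsum⟩, h2⟩
    match L, hsum, h2 with
    | [], hsum, _ => simp at hsum
    | a :: t, hsum, h2 =>
      have ha : 2 ≤ a := h2 a (List.mem_cons_self)
      simp only [List.sum_cons] at hsum
      omega
  simp

lemma CompGe2.card_le_fib (n : ℕ) : Nat.card (CompGe2 n) ≤ Nat.fib (n + 1) := by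
  induction n using Nat.strong_induction_on with
  | _ n ih =>
    match n, ih with
    | 0, _ =>
      have : Nat.card (CompGe2 0) = 1 := by
        rw [Nat.card_eq_one_iff_exists]
        refine ⟨⟨[], ⟨by simp, by simp⟩, by simp⟩, ?_⟩
        rintro ⟨L, ⟨hpos, hsum⟩, h2⟩
        apply Subtype.ext
        match L, hsum, h2 with
        | [], _, _ => rfl
        | a :: t, hsum, h2 =>
          have := h2 a (List.mem_cons_self)
          simp only [List.sum_cons] at hsum
          omega
      simp [this]
    | 1, _ => simp [CompGe2.card_eq_zero_one]
    | (m+2), ih =>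
      have hstep := Nat.card_le_card_of_injective _ (CompGe2.step_injective (n := m + 2) (by omega))
      rw [Nat.card_sum] at hstep
      have h1 : m + 2 - 1 = m + 1 := by omega
      have h2 : m + 2 - 2 = m := by omega
      rw [h1, h2] at hstep
      have ha : Nat.card (CompGe2 (m+1)) ≤ Nat.fib (m+2) := ih (m+1) (by omega)
      have hb : Nat.card (CompGe2 m) ≤ Nat.fib (m+1) := ih m (by omega)
      have h3 : Nat.fib (m+2+1) = Nat.fib (m+1) + Nat.fib (m+2) := Nat.fib_add_two
      omega

lemma fib_le_pow (n : ℕ) : (Nat.fib n : ℝ) ≤ 1.62 ^ n := by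
  induction n using Nat.twoStepInduction with
  | zero => norm_num
  | one => norm_num
  | more n ih1 ih2 =>
    rw [Nat.fib_add_two]
    push_cast
    have hpow : (0:ℝ) ≤ 1.62 ^ n := by positivity
    calc (Nat.fib n : ℝ) + Nat.fib (n+1) ≤ 1.62 ^ n + 1.62 ^ (n+1) := by linarith
      _ = 1.62 ^ n * 2.62 := by ring
      _ ≤ 1.62 ^ n * (1.62 * 1.62) := by nlinarith
      _ = 1.62 ^ (n + 2) := by ring

lemma base_le_2exp {α : ℝ} (hα0 : 0 < α) (hc : α ≤ 0.26) :
    (1.62:ℝ) ≤ 2 * Real.exp (-2 * α ^ 2) := by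
  have h := Real.add_one_le_exp (-2 * α ^ 2)
  nlinarith [sq_nonneg α]

lemma base_le_2rpow {α : ℝ} (hc : (0.26:ℝ) ≤ α) :
    (1.62:ℝ) ≤ (2:ℝ) ^ ((1:ℝ)/2 + α) := by
  have h19 : ((2:ℝ)^((19:ℝ)/25))^(25:ℕ) = (2:ℝ)^(19:ℕ) := by
    rw [← Real.rpow_natCast ((2:ℝ)^((19:ℝ)/25)) 25, ← Real.rpow_mul (by norm_num),
      ← Real.rpow_natCast 2 19]
    norm_num
  have h25 : (1.62:ℝ)^(25:ℕ) ≤ ((2:ℝ)^((19:ℝ)/25))^(25:ℕ) := by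
    rw [h19]; norm_num
  have hq : (1.62:ℝ) ≤ (2:ℝ)^((19:ℝ)/25) :=
    le_of_pow_le_pow_left₀ (by norm_num) (by positivity) h25
  refine hq.trans ?_
  exact Real.rpow_le_rpow_of_exponent_le (by norm_num) (by linarith)

/-- For every `0 < α < 1/2` there is a constant `C > 0` such that the number
of compositions of `n` all of whose parts are at least `2` is at most
`C · 2^{n-1} · (e^{-2α²n} + 2^{-(1/2-α)n})`. -/
theorem compositions_without_ones_bound (α : ℝ) (hα0 : 0 < α) (hα : α < 1 / 2) :
    ∃ C : ℝ, 0 < C ∧ ∀ n : ℕ, 0 < n →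
      (Nat.card {L : List ℕ // IsComposition n L ∧ ∀ x ∈ L, 2 ≤ x} : ℝ) ≤
        C * 2 ^ (n - 1) *
          (Real.exp (-2 * α ^ 2 * n) + (2 : ℝ) ^ (-(1 / 2 - α) * n)) := by
  refine ⟨4, by norm_num, ?_⟩
  intro n hn
  have hcard : (Nat.card {L : List ℕ // IsComposition n L ∧ ∀ x ∈ L, 2 ≤ x} : ℝ)
      ≤ 1.62 ^ (n + 1) :=
    le_trans (Nat.cast_le.2 (CompGe2.card_le_fib n)) (fib_le_pow (n + 1))
  set E := Real.exp (-2 * α ^ 2 * n) with hEdef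
  set T := (2:ℝ) ^ (-(1 / 2 - α) * n) with hTdef
  have hE : 0 < E := Real.exp_pos _
  have hT : 0 < T := Real.rpow_pos_of_pos two_pos _
  have h2n : (2:ℝ) ^ n = 2 ^ (n - 1) * 2 := by
    rw [← pow_succ]; congr 1; omega
  have key : (1.62:ℝ) ^ n ≤ 2 ^ n * (E + T) := by
    rcases le_total α 0.26 with hc | hc
    · have h1 : (1.62:ℝ) ^ n ≤ (2 * Real.exp (-2 * α ^ 2)) ^ n :=
        pow_le_pow_left₀ (by norm_num) (base_le_2exp hα0 hc) n
      have h2 : (2 * Real.exp (-2 * α ^ 2)) ^ n = 2 ^ n * E := by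
        rw [mul_pow, ← Real.exp_nat_mul, hEdef]
        ring_nf
      nlinarith [pow_pos (show (0:ℝ) < 2 by norm_num) n]
    · have h1 : (1.62:ℝ) ^ n ≤ ((2:ℝ) ^ ((1:ℝ)/2 + α)) ^ n :=
        pow_le_pow_left₀ (by norm_num) (base_le_2rpow hc) n
      have h2 : ((2:ℝ) ^ ((1:ℝ)/2 + α)) ^ n = 2 ^ n * T := by
        rw [← Real.rpow_natCast ((2:ℝ) ^ ((1:ℝ)/2 + α)) n, ← Real.rpow_mul (by norm_num)]
        have he : ((1:ℝ)/2 + α) * n = (n:ℝ) + (-(1/2 - α) * n) := by ring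
        rw [he, Real.rpow_add two_pos, Real.rpow_natCast, hTdef]
      nlinarith [pow_pos (show (0:ℝ) < 2 by norm_num) n]
  have h162 : (1.62:ℝ) ^ (n + 1) = 1.62 * 1.62 ^ n := by ring
  have hpos : (0:ℝ) ≤ 2 ^ n * (E + T) := by positivity
  calc (Nat.card {L : List ℕ // IsComposition n L ∧ ∀ x ∈ L, 2 ≤ x} : ℝ)
      ≤ 1.62 ^ (n + 1) := hcard
    _ = 1.62 * 1.62 ^ n := h162
    _ ≤ 2 * (2 ^ n * (E + T)) := by nlinarith [pow_nonneg (show (0:ℝ) ≤ 1.62 by norm_num) n]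
    _ = 4 * 2 ^ (n - 1) * (E + T) := by rw [h2n]; ring
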